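/- Along the interval consensus dynamics with nonempty interval intersection, if at some time t* the value H(x(t*)) = max{max_i x_i(t*), q_*} equals q_*, then H(x(t)) = q_* for all t ≥ t*; i.e., the sublevel set {x : max_i x_i ≤ q_*} is positively invariant. -/

import Mathlib

open Finset Filter
open scoped Topology

/-- Saturation of `z` onto the interval `[p, q]`. -/
noncomputable def sat (p q z : ℝ) : ℝ := max p (min z q)

/-- With nonempty interval intersection, if at some time `t*` all states are at
most `q_* = min_i q_i` (i.e. `H(x(t*)) = q_*`), then they remain at most `q_*`
for all later times: the sublevel set `{x : max_i x_i ≤ q_*}` is positively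
invariant. -/
theorem sublevel_set_positively_invariant
    (n : ℕ) (a : Fin (n + 1) → Fin (n + 1) → ℝ) (ha : ∀ i j, 0 ≤ a i j)
    (p q : Fin (n + 1) → ℝ) (hpq : ∀ m, p m ≤ q m)
    (pstar qstar : ℝ)
    (hpstar : pstar = Finset.univ.sup' Finset.univ_nonempty p)
    (hqstar : qstar = Finset.univ.inf' Finset.univ_nonempty q)
    (hinter : pstar ≤ qstar)
    (x : ℝ → Fin (n + 1) → ℝ)
    (hx : ∀ i t, HasDerivAt (fun s => x s i)
      (∑ j, a i j * (sat (p j) (q j) (x t j) - x t i)) t)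
    (tstar : ℝ) (htstar : 0 ≤ tstar)
    (hstar : ∀ i, x tstar i ≤ qstar) :
    ∀ t ≥ tstar, ∀ i, x t i ≤ qstar := by
  intro t1 ht1 i0
  set f : ℝ → ℝ := fun t => Finset.univ.sup' Finset.univ_nonempty (fun i => x t i) with hf_def
  have hxle : ∀ t i, x t i ≤ f t := fun t i => Finset.le_sup' _ (Finset.mem_univ i)
  have hxc : ∀ i, Continuous fun t => x t i := fun i =>
    continuous_iff_continuousAt.2 fun t => (hx i t).continuousAt
  have hfc : Continuous f :=
    Continuous.finset_sup'_apply Finset.univ_nonempty fun i _ => hxc i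
  suffices h : f t1 ≤ qstar from (hxle t1 i0).trans h
  have key : ∀ ε > 0, f t1 ≤ qstar + ε * Real.exp (t1 - tstar) := by
    intro ε hε
    set D : Fin (n + 1) → ℝ → ℝ :=
      fun i t => ∑ j, a i j * (sat (p j) (q j) (x t j) - x t i) with hD
    have hSne : ∀ t, (Finset.univ.filter (fun i => x t i = f t)).Nonempty := by
      intro t
      obtain ⟨i, _, hi⟩ := Finset.exists_mem_eq_sup' Finset.univ_nonempty (fun i => x t i)
      exact ⟨i, Finset.mem_filter.2 ⟨Finset.mem_univ i, hi.symm⟩⟩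
    set f' : ℝ → ℝ :=
      fun t => (Finset.univ.filter (fun i => x t i = f t)).sup' (hSne t) (fun i => D i t) with hf'_def
    set B : ℝ → ℝ := fun t => qstar + ε * Real.exp (t - tstar) with hB_def
    have hBc : Continuous B := by fun_prop
    have hB' : ∀ t0, HasDerivAt B (ε * Real.exp (t0 - tstar)) t0 := by
      intro t0
      have h := (Real.hasDerivAt_exp (t0 - tstar)).comp t0
        ((hasDerivAt_id t0).sub_const tstar)
      have h2 := (h.const_mul ε).const_add qstar
      simp only [mul_one] at h2
      exact h2
    have hf' : ∀ t0 ∈ Set.Ico tstar t1, ∀ r, f' t0 < r →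
        ∃ᶠ z in 𝓝[>] t0, slope f t0 z < r := by
      intro t0 _ r hr
      have hfreq : ∃ i : Fin (n + 1), ∃ᶠ z in 𝓝[>] t0, f z = x z i := by
        by_contra hcon
        push_neg at hcon
        have hall : ∀ᶠ z in 𝓝[>] t0, ∀ i, ¬f z = x z i := eventually_all.2 hcon
        obtain ⟨z, hz⟩ := hall.exists
        obtain ⟨i, hi⟩ := hSne z
        exact hz i ((Finset.mem_filter.1 hi).2).symm
      obtain ⟨i, hi⟩ := hfreq
      have hmax : x t0 i = f t0 := by
        refine le_antisymm (hxle t0 i) (Finset.sup'_le _ _ fun k _ => ?_)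
        have hfr : ∃ᶠ z in 𝓝[>] t0, x z k ≤ x z i :=
          hi.mono fun z hz => hz ▸ hxle z k
        set l : Filter ℝ := (𝓝[>] t0) ⊓ 𝓟 {z : ℝ | x z k ≤ x z i} with hl
        haveI hne : l.NeBot := Filter.frequently_iff_neBot.1 hfr
        have hlle : l ≤ 𝓝 t0 := le_trans inf_le_left nhdsWithin_le_nhds
        refine le_of_tendsto_of_tendsto (((hxc k).tendsto t0).mono_left hlle)
          (((hxc i).tendsto t0).mono_left hlle) ?_
        exact eventually_inf_principal.2 (Filter.Eventually.of_forall fun z hz => hz)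
      have himem : i ∈ Finset.univ.filter (fun j => x t0 j = f t0) :=
        Finset.mem_filter.2 ⟨Finset.mem_univ i, hmax⟩
      have hDle : D i t0 ≤ f' t0 := Finset.le_sup' (fun j => D j t0) himem
      have hslope : Filter.Tendsto (slope (fun s => x s i) t0) (𝓝[≠] t0) (𝓝 (D i t0)) :=
        hasDerivAt_iff_tendsto_slope.1 (hx i t0)
      have hev : ∀ᶠ z in 𝓝[>] t0, slope (fun s => x s i) t0 z < r := by
        have h1 : ∀ᶠ z in 𝓝[≠] t0, slope (fun s => x s i) t0 z < r :=
          hslope.eventually (gt_mem_nhds (lt_of_le_of_lt hDle hr))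
        exact h1.filter_mono (nhdsWithin_mono t0 fun z hz => ne_of_gt hz)
      refine (hi.and_eventually hev).mono ?_
      rintro z ⟨h1, h2⟩
      have heq : slope f t0 z = slope (fun s => x s i) t0 z := by
        rw [slope_def_field, slope_def_field, h1, ← hmax]
      rw [heq]; exact h2
    have bound : ∀ t0 ∈ Set.Ico tstar t1, f t0 = B t0 → f' t0 < ε * Real.exp (t0 - tstar) := by
      intro t0 _ hfB
      have hBpos : 0 < ε * Real.exp (t0 - tstar) := mul_pos hε (Real.exp_pos _)
      refine lt_of_le_of_lt (Finset.sup'_le _ _ fun i himem => ?_) hBpos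
      have hieq : x t0 i = f t0 := (Finset.mem_filter.1 himem).2
      have hq : qstar ≤ f t0 := by
        rw [hfB]; simp only [hB_def]; nlinarith [Real.exp_pos (t0 - tstar)]
      refine Finset.sum_nonpos fun j _ => mul_nonpos_iff.2 (Or.inl ⟨ha i j, ?_⟩)
      have h1 : p j ≤ pstar := hpstar ▸ Finset.le_sup' p (Finset.mem_univ j)
      have h2 : sat (p j) (q j) (x t0 j) ≤ f t0 :=
        max_le (h1.trans (hinter.trans hq)) ((min_le_left _ _).trans (hxle t0 j))
      exact sub_nonpos.2 (by rw [hieq]; exact h2)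
    have hA : f tstar ≤ B tstar := by
      have : f tstar ≤ qstar := Finset.sup'_le _ _ fun i _ => hstar i
      have he : Real.exp (tstar - tstar) = 1 := by simp
      simp only [hB_def, he, mul_one]
      linarith
    have := image_le_of_liminf_slope_right_lt_deriv_boundary' hfc.continuousOn hf' hA
      hBc.continuousOn (fun t0 _ => (hB' t0).hasDerivWithinAt) bound
      (Set.right_mem_Icc.2 ht1)
    simpa using this
  refine le_of_forall_pos_le_add fun ε hε => ?_
  have h := key (ε / Real.exp (t1 - tstar)) (div_pos hε (Real.exp_pos _))
  rwa [div_mul_cancel₀ _ (Real.exp_pos _).ne'] at h
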